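/- The Hecke algebra H_q(Σ_r) over a field k with q ∈ k^×, equipped with the bilinear form extending ⟨T_u, T_v⟩ = q^{ℓ(u)} if u = v⁻¹ and 0 otherwise, is a symmetric algebra. -/

import Mathlib

/-!
Statement 4: The Hecke algebra `H_q(Σ_r)` over a field `k` with `q ∈ kˣ`, equipped
with the bilinear form extending `⟨T_u, T_v⟩ = q^{ℓ(u)}` if `u = v⁻¹` and `0`
otherwise, is a symmetric algebra.

The Hecke algebra is characterised here as a `k`-algebra `H` with a basis
`{T_w : w ∈ Σ_r}` such that `T_1 = 1` and the usual multiplication rules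
`T_s T_w = T_{sw}` when `ℓ(sw) = ℓ(w) + 1` and
`T_s T_w = q T_{sw} + (q-1) T_w` when `ℓ(sw) = ℓ(w) - 1`
hold for simple transpositions `s` (these rules together with the basis property are
equivalent to the standard presentation by generators `T_i` with braid relations and
quadratic relations `(T_i - q)(T_i + 1) = 0`).
-/

variable {r : ℕ}

/-- The length of a permutation: its number of inversions. -/
def heckeLen (w : Equiv.Perm (Fin r)) : ℕ :=
  (Finset.univ.filter fun p : Fin r × Fin r => p.1 < p.2 ∧ w p.2 < w p.1).card

/-- The simple transposition `(i, i+1)`. -/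
def simpleRefl (i : Fin r) (hi : (i : ℕ) + 1 < r) : Equiv.Perm (Fin r) :=
  Equiv.swap i ⟨(i : ℕ) + 1, hi⟩

/-- The symmetrising bilinear form of the Hecke algebra, extending
`⟨T_u, T_v⟩ = q^{ℓ(u)}` if `u = v⁻¹` and `0` otherwise. -/
noncomputable def heckeForm {k : Type*} [Field k] {H : Type*} [Ring H] [Algebra k H]
    (q : k) (T : Module.Basis (Equiv.Perm (Fin r)) k H) (x y : H) : k :=
  (T.repr x).sum fun u cu => cu * (T.repr y u⁻¹) * q ^ heckeLen u


lemma heckeLen_one : heckeLen (1 : Equiv.Perm (Fin r)) = 0 := by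
  rw [heckeLen, Finset.card_eq_zero, Finset.filter_eq_empty_iff]
  rintro p - ⟨h1, h2⟩
  simp only [Equiv.Perm.one_apply] at h2
  exact absurd h1 (not_lt.2 h2.le)

lemma heckeLen_inv (w : Equiv.Perm (Fin r)) : heckeLen w⁻¹ = heckeLen w := by
  rw [heckeLen, heckeLen]
  apply Finset.card_nbij' (i := fun p => (w⁻¹ p.2, w⁻¹ p.1)) (j := fun p => (w p.2, w p.1))
  · rintro ⟨a, b⟩ hp
    simp only [Finset.mem_coe, Finset.mem_filter, Finset.mem_univ, true_and] at hp ⊢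
    exact ⟨hp.2, by simpa using hp.1⟩
  · rintro ⟨a, b⟩ hp
    simp only [Finset.mem_coe, Finset.mem_filter, Finset.mem_univ, true_and] at hp ⊢
    exact ⟨hp.2, by simpa using hp.1⟩
  · rintro ⟨a, b⟩ _; simp
  · rintro ⟨a, b⟩ _; simp

section swap

variable (i : Fin r) (hi : (i : ℕ) + 1 < r)

lemma swap_lt_iff (x y : Fin r) (h1 : ¬(x = i ∧ y = ⟨(i:ℕ)+1, hi⟩))
    (h2 : ¬(x = ⟨(i:ℕ)+1, hi⟩ ∧ y = i)) :
    (Equiv.swap i ⟨(i:ℕ)+1, hi⟩ x < Equiv.swap i ⟨(i:ℕ)+1, hi⟩ y ↔ x < y) := by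
  have hjv : ((⟨(i:ℕ)+1, hi⟩ : Fin r) : ℕ) = (i:ℕ)+1 := rfl
  have hxr := x.isLt
  have hyr := y.isLt
  simp only [Equiv.swap_apply_def]
  split_ifs <;>
    (simp only [Fin.ext_iff, Fin.lt_def, not_and] at * <;> omega)

/-- Key: left multiplication by a simple transposition changes length by exactly one. -/
lemma heckeLen_simple_mul (w : Equiv.Perm (Fin r)) :
    (w⁻¹ i < w⁻¹ ⟨(i:ℕ)+1, hi⟩ →
      heckeLen (simpleRefl i hi * w) = heckeLen w + 1) ∧
    (w⁻¹ ⟨(i:ℕ)+1, hi⟩ < w⁻¹ i →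
      heckeLen (simpleRefl i hi * w) + 1 = heckeLen w) := by
  set j : Fin r := ⟨(i:ℕ)+1, hi⟩ with hj
  set s := Equiv.swap i j with hs
  have hij : i ≠ j := by simp [hj, Fin.ext_iff]
  set A := (Finset.univ.filter fun p : Fin r × Fin r => p.1 < p.2 ∧ w p.2 < w p.1) with hA
  set B := (Finset.univ.filter fun p : Fin r × Fin r =>
      p.1 < p.2 ∧ (simpleRefl i hi * w) p.2 < (simpleRefl i hi * w) p.1) with hB
  have hmul : ∀ x, (simpleRefl i hi * w) x = s (w x) := fun x => rfl
  -- membership iff for pairs other than the special one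
  have hiff : ∀ p : Fin r × Fin r, p ≠ (w⁻¹ i, w⁻¹ j) → p ≠ (w⁻¹ j, w⁻¹ i) →
      (p ∈ B ↔ p ∈ A) := by
    rintro ⟨a, b⟩ hp1 hp2
    simp only [hA, hB, Finset.mem_filter, Finset.mem_univ, true_and, hmul]
    have hinv : ∀ (a c : Fin r), w a = c → a = w⁻¹ c := fun a c h => by simp [← h]
    have hc1 : ¬(w b = i ∧ w a = j) := by
      rintro ⟨h1', h2'⟩
      exact hp2 (Prod.ext (hinv _ _ h2') (hinv _ _ h1'))
    have hc2 : ¬(w b = j ∧ w a = i) := by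
      rintro ⟨h1', h2'⟩
      exact hp1 (Prod.ext (hinv _ _ h2') (hinv _ _ h1'))
    constructor
    · rintro ⟨hab, hlt⟩
      exact ⟨hab, (swap_lt_iff i hi (w b) (w a) hc1 hc2).1 hlt⟩
    · rintro ⟨hab, hlt⟩
      exact ⟨hab, (swap_lt_iff i hi (w b) (w a) hc1 hc2).2 hlt⟩
  have hne : w⁻¹ i ≠ w⁻¹ j := fun h => hij ((w⁻¹).injective h)
  have hwi : w (w⁻¹ i) = i := w.apply_symm_apply i
  have hwj : w (w⁻¹ j) = j := w.apply_symm_apply j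
  have hiltj : i < j := by simp [hj, Fin.lt_def]
  have hsij : s i = j := Equiv.swap_apply_left i j
  have hsji : s j = i := Equiv.swap_apply_right i j
  have hcard : heckeLen (simpleRefl i hi * w) = B.card := rfl
  have hcard' : heckeLen w = A.card := rfl
  constructor
  · intro hlt
    have hB0 : (w⁻¹ i, w⁻¹ j) ∈ B := by
      simp only [hB, Finset.mem_filter, Finset.mem_univ, true_and, hmul]
      exact ⟨hlt, by rw [hwi, hwj, hsij, hsji]; exact hiltj⟩
    have hA0 : (w⁻¹ i, w⁻¹ j) ∉ A := by
      simp only [hA, Finset.mem_filter, Finset.mem_univ, true_and, hwi, hwj]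
      rintro ⟨-, hij2⟩
      exact absurd hiltj (not_lt.2 hij2.le)
    have hBA : B = insert (w⁻¹ i, w⁻¹ j) A := by
      ext p
      rcases eq_or_ne p (w⁻¹ i, w⁻¹ j) with hp | hp
      · subst hp; exact iff_of_true hB0 (Finset.mem_insert_self _ _)
      · rcases eq_or_ne p (w⁻¹ j, w⁻¹ i) with hp' | hp'
        · subst hp'
          simp only [Finset.mem_insert, hB, hA, Finset.mem_filter, Finset.mem_univ, true_and]
          constructor
          · rintro ⟨h', -⟩; exact absurd hlt (not_lt.2 h'.le)
          · rintro (h | ⟨h', -⟩)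
            · exact absurd (congrArg Prod.fst h) hne.symm
            · exact absurd hlt (not_lt.2 h'.le)
        · rw [Finset.mem_insert, hiff p hp hp']
          simp only [hp, false_or]
    rw [hcard, hcard', hBA, Finset.card_insert_of_notMem hA0]
  · intro hlt
    have hA0 : (w⁻¹ j, w⁻¹ i) ∈ A := by
      simp only [hA, Finset.mem_filter, Finset.mem_univ, true_and, hwi, hwj]
      exact ⟨hlt, hiltj⟩
    have hB0 : (w⁻¹ j, w⁻¹ i) ∉ B := by
      simp only [hB, Finset.mem_filter, Finset.mem_univ, true_and, hmul, hwi, hwj, hsij, hsji]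
      rintro ⟨-, hij2⟩
      exact absurd hiltj (not_lt.2 hij2.le)
    have hAB : A = insert (w⁻¹ j, w⁻¹ i) B := by
      ext p
      rcases eq_or_ne p (w⁻¹ j, w⁻¹ i) with hp | hp
      · subst hp; exact iff_of_true hA0 (Finset.mem_insert_self _ _)
      · rcases eq_or_ne p (w⁻¹ i, w⁻¹ j) with hp' | hp'
        · subst hp'
          simp only [Finset.mem_insert, hB, hA, Finset.mem_filter, Finset.mem_univ, true_and]
          constructor
          · rintro ⟨h', -⟩; exact absurd hlt (not_lt.2 h'.le)
          · rintro (h | ⟨h', -⟩)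
            · exact absurd (congrArg Prod.fst h) hne
            · exact absurd hlt (not_lt.2 h'.le)
        · rw [Finset.mem_insert, hiff p hp' hp]
          simp only [hp, false_or]
    rw [hcard, hcard', hAB, Finset.card_insert_of_notMem hB0]

end swap

lemma heckeLen_simpleRefl (i : Fin r) (hi : (i : ℕ) + 1 < r) :
    heckeLen (simpleRefl i hi) = 1 := by
  have h := (heckeLen_simple_mul i hi 1).1 (by simp [Fin.lt_def])
  simpa [heckeLen_one] using h

lemma heckeLen_up_or_down (i : Fin r) (hi : (i : ℕ) + 1 < r) (w : Equiv.Perm (Fin r)) :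
    heckeLen (simpleRefl i hi * w) = heckeLen w + 1 ∨
    heckeLen (simpleRefl i hi * w) + 1 = heckeLen w := by
  rcases lt_trichotomy (w⁻¹ i) (w⁻¹ ⟨(i:ℕ)+1, hi⟩) with h | h | h
  · exact Or.inl ((heckeLen_simple_mul i hi w).1 h)
  · exact absurd (w⁻¹.injective h) (by simp [Fin.ext_iff])
  · exact Or.inr ((heckeLen_simple_mul i hi w).2 h)

lemma exists_descent (σ : Equiv.Perm (Fin r)) (hσ : σ ≠ 1) :
    ∃ (i : Fin r) (hi : (i : ℕ) + 1 < r), σ ⟨(i:ℕ)+1, hi⟩ < σ i := by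
  by_contra hcon
  push_neg at hcon
  apply hσ
  have hmono : StrictMono σ := by
    cases r with
    | zero => exact fun x => x.elim0
    | succ n =>
      rw [Fin.strictMono_iff_lt_succ]
      intro i
      have hi : ((i.castSucc : Fin (n+1)) : ℕ) + 1 < n + 1 := by
        simpa using i.isLt
      have := hcon i.castSucc hi
      have hij : (⟨((i.castSucc : Fin (n+1)) : ℕ) + 1, hi⟩ : Fin (n+1)) = i.succ := by
        simp [Fin.ext_iff]
      rw [hij] at this
      rcases lt_or_eq_of_le this with h | h
      · exact h
      · exact absurd (σ.injective h) (by simp [Fin.ext_iff])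
  apply Equiv.ext
  intro x
  have : StrictMono.orderIsoOfSurjective σ hmono σ.surjective = OrderIso.refl (Fin r) :=
    Subsingleton.elim _ _
  have hx : StrictMono.orderIsoOfSurjective σ hmono σ.surjective x = σ x := rfl
  rw [this] at hx
  simpa using hx.symm

lemma exists_left_descent (w : Equiv.Perm (Fin r)) (hw : w ≠ 1) :
    ∃ (i : Fin r) (hi : (i : ℕ) + 1 < r),
      heckeLen (simpleRefl i hi * w) + 1 = heckeLen w := by
  obtain ⟨i, hi, hlt⟩ := exists_descent w⁻¹ (by simpa using hw)
  exact ⟨i, hi, (heckeLen_simple_mul i hi w).2 hlt⟩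

lemma simpleRefl_mul_self (i : Fin r) (hi : (i : ℕ) + 1 < r) :
    simpleRefl i hi * simpleRefl i hi = 1 := Equiv.swap_mul_self _ _

lemma heckeLen_eq_zero {w : Equiv.Perm (Fin r)} (h : heckeLen w = 0) : w = 1 := by
  by_contra hw
  obtain ⟨i, hi, hd⟩ := exists_left_descent w hw
  omega


lemma simpleRefl_inv (i : Fin r) (hi : (i : ℕ) + 1 < r) :
    (simpleRefl i hi)⁻¹ = simpleRefl i hi := Equiv.swap_inv _ _

lemma heckeLen_mul_simple (u : Equiv.Perm (Fin r)) (i : Fin r) (hi : (i : ℕ) + 1 < r) :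
    heckeLen (u * simpleRefl i hi) = heckeLen (simpleRefl i hi * u⁻¹) := by
  rw [← heckeLen_inv (u * simpleRefl i hi), mul_inv_rev, simpleRefl_inv]

lemma heckeLen_mul_simple_or (u : Equiv.Perm (Fin r)) (i : Fin r) (hi : (i : ℕ) + 1 < r) :
    heckeLen (u * simpleRefl i hi) = heckeLen u + 1 ∨
    heckeLen (u * simpleRefl i hi) + 1 = heckeLen u := by
  have h := heckeLen_up_or_down i hi u⁻¹
  rw [← heckeLen_mul_simple u i hi, heckeLen_inv] at h
  exact h

section algebra

variable {k : Type*} [Field k] {H : Type*} [Ring H] [Algebra k H]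
  (q : k) (T : Module.Basis (Equiv.Perm (Fin r)) k H)

/-- Right multiplication rule, increasing case. -/
lemma mul_simple_up
    (hone : T 1 = 1)
    (hmul_up : ∀ (i : Fin r) (hi : (i : ℕ) + 1 < r) (w : Equiv.Perm (Fin r)),
      heckeLen (simpleRefl i hi * w) = heckeLen w + 1 →
        T (simpleRefl i hi) * T w = T (simpleRefl i hi * w)) :
    ∀ (n : ℕ) (u : Equiv.Perm (Fin r)), heckeLen u = n →
      ∀ (i : Fin r) (hi : (i : ℕ) + 1 < r),
      heckeLen (u * simpleRefl i hi) = heckeLen u + 1 →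
        T u * T (simpleRefl i hi) = T (u * simpleRefl i hi) := by
  intro n
  induction n using Nat.strong_induction_on with
  | _ n ih =>
    intro u hu i hi hlen
    rcases eq_or_ne u 1 with rfl | hu1
    · rw [hone, one_mul, one_mul]
    · obtain ⟨t, ht, hdesc⟩ := exists_left_descent u hu1
      have huu : simpleRefl t ht * (simpleRefl t ht * u) = u := by
        rw [← mul_assoc, simpleRefl_mul_self, one_mul]
      have hTu : T (simpleRefl t ht) * T (simpleRefl t ht * u) = T u := by
        have h := hmul_up t ht (simpleRefl t ht * u) (by rw [huu]; omega)
        rw [huu] at h; exact h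
      have h3 : simpleRefl t ht * (simpleRefl t ht * u * simpleRefl i hi)
          = u * simpleRefl i hi := by
        rw [← mul_assoc, ← mul_assoc, simpleRefl_mul_self, one_mul]
      have h1 : heckeLen (simpleRefl t ht * u * simpleRefl i hi)
          = heckeLen (simpleRefl t ht * u) + 1 := by
        have h2 := heckeLen_up_or_down t ht (simpleRefl t ht * u * simpleRefl i hi)
        have h4 := heckeLen_mul_simple_or (simpleRefl t ht * u) i hi
        rw [h3] at h2
        rcases h2 with h2 | h2 <;> rcases h4 with h4 | h4 <;> omega
      have ih' := ih (heckeLen (simpleRefl t ht * u)) (by omega)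
        (simpleRefl t ht * u) rfl i hi h1
      have h5 : heckeLen (simpleRefl t ht * (simpleRefl t ht * u * simpleRefl i hi))
          = heckeLen (simpleRefl t ht * u * simpleRefl i hi) + 1 := by
        rw [h3]; omega
      rw [← hTu, mul_assoc, ih', hmul_up t ht _ h5, h3]

/-- Right multiplication rule, decreasing case. -/
lemma mul_simple_down
    (hone : T 1 = 1)
    (hmul_up : ∀ (i : Fin r) (hi : (i : ℕ) + 1 < r) (w : Equiv.Perm (Fin r)),
      heckeLen (simpleRefl i hi * w) = heckeLen w + 1 →
        T (simpleRefl i hi) * T w = T (simpleRefl i hi * w))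
    (hmul_down : ∀ (i : Fin r) (hi : (i : ℕ) + 1 < r) (w : Equiv.Perm (Fin r)),
      heckeLen (simpleRefl i hi * w) + 1 = heckeLen w →
        T (simpleRefl i hi) * T w
          = q • T (simpleRefl i hi * w) + (q - 1) • T w)
    (u : Equiv.Perm (Fin r)) (i : Fin r) (hi : (i : ℕ) + 1 < r)
    (hlen : heckeLen (u * simpleRefl i hi) + 1 = heckeLen u) :
    T u * T (simpleRefl i hi)
      = q • T (u * simpleRefl i hi) + (q - 1) • T u := by
  have hss : simpleRefl i hi * simpleRefl i hi = 1 := simpleRefl_mul_self i hi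
  have huu : u * simpleRefl i hi * simpleRefl i hi = u := by
    rw [mul_assoc, hss, mul_one]
  have hTs : T (simpleRefl i hi) * T (simpleRefl i hi)
      = q • (1 : H) + (q - 1) • T (simpleRefl i hi) := by
    have h := hmul_down i hi (simpleRefl i hi)
      (by rw [hss, heckeLen_one, heckeLen_simpleRefl])
    rw [hss, hone] at h; exact h
  have hTu : T (u * simpleRefl i hi) * T (simpleRefl i hi) = T u := by
    have h := mul_simple_up T hone hmul_up (heckeLen (u * simpleRefl i hi))
      (u * simpleRefl i hi) rfl i hi (by rw [huu]; omega)
    rw [huu] at h; exact h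
  calc T u * T (simpleRefl i hi)
      = T (u * simpleRefl i hi) * T (simpleRefl i hi) * T (simpleRefl i hi) := by rw [hTu]
    _ = T (u * simpleRefl i hi) * (T (simpleRefl i hi) * T (simpleRefl i hi)) := by
        rw [mul_assoc]
    _ = T (u * simpleRefl i hi) * (q • (1 : H) + (q - 1) • T (simpleRefl i hi)) := by
        rw [hTs]
    _ = q • T (u * simpleRefl i hi)
        + (q - 1) • (T (u * simpleRefl i hi) * T (simpleRefl i hi)) := by
        rw [mul_add, mul_smul_comm, mul_smul_comm, mul_one]
    _ = q • T (u * simpleRefl i hi) + (q - 1) • T u := by rw [hTu]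

/-- The trace property. -/
lemma trace_mul
    (hone : T 1 = 1)
    (hmul_up : ∀ (i : Fin r) (hi : (i : ℕ) + 1 < r) (w : Equiv.Perm (Fin r)),
      heckeLen (simpleRefl i hi * w) = heckeLen w + 1 →
        T (simpleRefl i hi) * T w = T (simpleRefl i hi * w))
    (hmul_down : ∀ (i : Fin r) (hi : (i : ℕ) + 1 < r) (w : Equiv.Perm (Fin r)),
      heckeLen (simpleRefl i hi * w) + 1 = heckeLen w →
        T (simpleRefl i hi) * T w
          = q • T (simpleRefl i hi * w) + (q - 1) • T w) :
    ∀ (n : ℕ) (v : Equiv.Perm (Fin r)), heckeLen v = n →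
      ∀ u : Equiv.Perm (Fin r),
      T.repr (T u * T v) 1 = if v = u⁻¹ then q ^ heckeLen u else 0 := by
  intro n
  induction n using Nat.strong_induction_on with
  | _ n ih =>
    intro v hv u
    rcases eq_or_ne v 1 with rfl | hv1
    · rw [hone, mul_one, T.repr_self, Finsupp.single_apply]
      rcases eq_or_ne u 1 with rfl | hu1
      · simp [heckeLen_one]
      · rw [if_neg hu1, if_neg (fun h => hu1 (by rw [← inv_inv u, ← h, inv_one]))]
    · obtain ⟨j, hj, hdesc⟩ := exists_left_descent v hv1
      have hvv : simpleRefl j hj * (simpleRefl j hj * v) = v := by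
        rw [← mul_assoc, simpleRefl_mul_self, one_mul]
      have hTv : T (simpleRefl j hj) * T (simpleRefl j hj * v) = T v := by
        have h := hmul_up j hj (simpleRefl j hj * v) (by rw [hvv]; omega)
        rw [hvv] at h; exact h
      have hcond : (simpleRefl j hj * v = (u * simpleRefl j hj)⁻¹) ↔ (v = u⁻¹) := by
        rw [mul_inv_rev, simpleRefl_inv, mul_right_inj]
      have hassoc : T u * T v = (T u * T (simpleRefl j hj)) * T (simpleRefl j hj * v) := by
        rw [mul_assoc, hTv]
      have hihv' : heckeLen (simpleRefl j hj * v) < n := by omega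
      rcases heckeLen_mul_simple_or u j hj with hup | hdown
      · have hTus : T u * T (simpleRefl j hj) = T (u * simpleRefl j hj) :=
          mul_simple_up T hone hmul_up (heckeLen u) u rfl j hj hup
        rw [hassoc, hTus,
          ih (heckeLen (simpleRefl j hj * v)) hihv' (simpleRefl j hj * v) rfl
            (u * simpleRefl j hj)]
        by_cases hc : v = u⁻¹
        · exfalso
          have h1 : simpleRefl j hj * v = (u * simpleRefl j hj)⁻¹ := hcond.2 hc
          have h2 : heckeLen (simpleRefl j hj * v) = heckeLen (u * simpleRefl j hj) := by
            rw [h1, heckeLen_inv]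
          have h3 : heckeLen v = heckeLen u := by rw [hc, heckeLen_inv]
          omega
        · rw [if_neg hc, if_neg (fun h => hc (hcond.1 h))]
      · have hTus := mul_simple_down q T hone hmul_up hmul_down u j hj hdown
        rw [hassoc, hTus, add_mul, smul_mul_assoc, smul_mul_assoc, map_add, map_smul,
          map_smul, Finsupp.add_apply, Finsupp.smul_apply, Finsupp.smul_apply,
          ih (heckeLen (simpleRefl j hj * v)) hihv' (simpleRefl j hj * v) rfl
            (u * simpleRefl j hj),
          ih (heckeLen (simpleRefl j hj * v)) hihv' (simpleRefl j hj * v) rfl u]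
        have hc2 : ¬ (simpleRefl j hj * v = u⁻¹) := by
          intro h
          have h2 : heckeLen (simpleRefl j hj * v) = heckeLen u := by rw [h, heckeLen_inv]
          have h3 : v = (u * simpleRefl j hj)⁻¹ := by
            rw [mul_inv_rev, simpleRefl_inv, ← h, ← mul_assoc, simpleRefl_mul_self, one_mul]
          have h4 : heckeLen v = heckeLen (u * simpleRefl j hj) := by rw [h3, heckeLen_inv]
          omega
        rw [if_neg hc2, smul_eq_mul, smul_eq_mul, mul_zero, add_zero]
        by_cases hc : v = u⁻¹
        · rw [if_pos (hcond.2 hc), if_pos hc]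
          have he : heckeLen u = heckeLen (u * simpleRefl j hj) + 1 := by omega
          rw [he, pow_succ']
        · rw [if_neg (fun h => hc (hcond.1 h)), if_neg hc, mul_zero]

end algebra

/-- The Hecke algebra `H_q(Σ_r)`, for `q` invertible, is a symmetric
algebra via the form `⟨T_u, T_v⟩ = q^{ℓ(u)} δ_{u, v⁻¹}`: this form is symmetric,
associative and non-degenerate. -/
theorem heckeAlgebra_symmetric {k : Type*} [Field k] {H : Type*} [Ring H] [Algebra k H]
    (q : k) (hq : q ≠ 0)
    (T : Module.Basis (Equiv.Perm (Fin r)) k H)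
    (hone : T 1 = 1)
    (hmul_up : ∀ (i : Fin r) (hi : (i : ℕ) + 1 < r) (w : Equiv.Perm (Fin r)),
      heckeLen (simpleRefl i hi * w) = heckeLen w + 1 →
        T (simpleRefl i hi) * T w = T (simpleRefl i hi * w))
    (hmul_down : ∀ (i : Fin r) (hi : (i : ℕ) + 1 < r) (w : Equiv.Perm (Fin r)),
      heckeLen (simpleRefl i hi * w) + 1 = heckeLen w →
        T (simpleRefl i hi) * T w
          = q • T (simpleRefl i hi * w) + (q - 1) • T w) :
    (∀ x y : H, heckeForm q T x y = heckeForm q T y x)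
    ∧ (∀ x y z : H, heckeForm q T (x * y) z = heckeForm q T x (y * z))
    ∧ (∀ x : H, (∀ y : H, heckeForm q T x y = 0) → x = 0) := by
  classical
  have htr := trace_mul q T hone hmul_up hmul_down
  let L2 : H →ₗ[k] H →ₗ[k] k :=
    (LinearMap.mul k H).compr₂ ((Finsupp.lapply 1).comp T.repr.toLinearMap)
  have hL2 : ∀ x y : H, L2 x y = T.repr (x * y) 1 := fun x y => rfl
  have hadd1 : ∀ (x x' y : H),
      heckeForm q T (x + x') y = heckeForm q T x y + heckeForm q T x' y := by
    intro x x' y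
    rw [heckeForm, heckeForm, heckeForm, map_add]
    exact Finsupp.sum_add_index' (fun u => by ring) (fun u c1 c2 => by ring)
  have hsmul1 : ∀ (c : k) (x y : H), heckeForm q T (c • x) y = c * heckeForm q T x y := by
    intro c x y
    rw [heckeForm, heckeForm, map_smul, Finsupp.sum_smul_index (fun u => by ring),
      Finsupp.mul_sum]
    exact Finsupp.sum_congr fun u _ => by ring
  have hadd2 : ∀ (x y y' : H),
      heckeForm q T x (y + y') = heckeForm q T x y + heckeForm q T x y' := by
    intro x y y'
    simp only [heckeForm, map_add, Finsupp.add_apply, Finsupp.sum]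
    rw [← Finset.sum_add_distrib]
    exact Finset.sum_congr rfl (fun u _ => by ring)
  have hsmul2 : ∀ (c : k) (x y : H), heckeForm q T x (c • y) = c * heckeForm q T x y := by
    intro c x y
    simp only [heckeForm, map_smul, Finsupp.smul_apply, smul_eq_mul, Finsupp.sum,
      Finset.mul_sum]
    exact Finset.sum_congr rfl (fun u _ => by ring)
  let L1 : H →ₗ[k] H →ₗ[k] k := LinearMap.mk₂ k (heckeForm q T) hadd1 hsmul1 hadd2 hsmul2
  have hL1 : ∀ x y : H, heckeForm q T x y = L1 x y := fun x y => rfl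
  have hb : ∀ a b : Equiv.Perm (Fin r), L1 (T a) (T b) = L2 (T a) (T b) := by
    intro a b
    rw [← hL1, hL2]
    rw [heckeForm, T.repr_self, Finsupp.sum_single_index (by ring), T.repr_self,
      htr (heckeLen b) b rfl a, Finsupp.single_apply]
    split_ifs with h <;> ring
  have hL12 : L1 = L2 := T.ext fun a => T.ext fun b => hb a b
  have hform : ∀ x y : H, heckeForm q T x y = T.repr (x * y) 1 := by
    intro x y
    rw [hL1 x y, hL12]
    exact hL2 x y
  have hsymb : ∀ a b : Equiv.Perm (Fin r),
      T.repr (T a * T b) 1 = T.repr (T b * T a) 1 := by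
    intro a b
    rw [htr _ b rfl a, htr _ a rfl b]
    by_cases h : b = a⁻¹
    · rw [if_pos h, if_pos (by rw [h, inv_inv]), h, heckeLen_inv]
    · rw [if_neg h, if_neg fun h' => h (by rw [h', inv_inv])]
  have hflip : L2 = L2.flip := by
    refine T.ext fun a => T.ext fun b => ?_
    rw [LinearMap.flip_apply, hL2, hL2]
    exact hsymb a b
  refine ⟨?_, ?_, ?_⟩
  · intro x y
    rw [hform, hform]
    calc T.repr (x * y) 1 = L2 x y := (hL2 x y).symm
      _ = L2.flip x y := by rw [← hflip]
      _ = L2 y x := rfl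
      _ = T.repr (y * x) 1 := hL2 y x
  · intro x y z
    rw [hform, hform, mul_assoc]
  · intro x hx
    have hco : ∀ u : Equiv.Perm (Fin r), T.repr x u = 0 := by
      intro u
      have h1 := hx (T u⁻¹)
      have h2 : heckeForm q T x (T u⁻¹) = T.repr x u * q ^ heckeLen u := by
        rw [heckeForm, T.repr_self, Finsupp.sum, Finset.sum_eq_single u]
        · rw [Finsupp.single_apply, if_pos rfl, mul_one]
        · intro c _ hcu
          rw [Finsupp.single_apply, if_neg (fun h => hcu (inv_injective h).symm),
            mul_zero, zero_mul]
        · intro hu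
          rw [Finsupp.notMem_support_iff.1 hu, zero_mul, zero_mul]
      rw [h2] at h1
      rcases mul_eq_zero.1 h1 with h | h
      · exact h
      · exact absurd h (pow_ne_zero _ hq)
    have h0 : T.repr x = 0 :=
      Finsupp.ext fun u => (hco u).trans (Finsupp.zero_apply (a := u)).symm
    exact (LinearEquiv.map_eq_zero_iff T.repr).1 h0
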